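/- Let R be a commutative ring, let a ∈ R, and let r ≥ 1. The formal power series 1 − X + a·X^{r+1} in R⟦X⟧ is invertible (its constant coefficient is 1), and for every n ≥ 0 the coefficient of X^n in its inverse (1 − X + a·X^{r+1})⁻¹ equals Σ_{l=0}^{⌊n/(r+1)⌋} (−1)^l · C(n − l·r, l) · a^l. -/

import Mathlib

open PowerSeries Finset

private def gg {R : Type*} [CommRing R] (a : R) (r : ℕ) (n : ℕ) : R :=
  ∑ l ∈ Finset.range (n / (r + 1) + 1),
    (-1 : R) ^ l * (Nat.choose (n - l * r) l : R) * a ^ l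

private lemma gg_zero {R : Type*} [CommRing R] (a : R) (r : ℕ) : gg a r 0 = 1 := by
  simp [gg]

private lemma gg_rec {R : Type*} [CommRing R] (a : R) (r : ℕ) (n : ℕ) (hn : r + 1 ≤ n) :
    gg a r n - gg a r (n - 1) + a * gg a r (n - (r + 1)) = 0 := by
  have hN1 : 1 ≤ n / (r + 1) := (Nat.one_le_div_iff (by omega)).mpr hn
  have hA : gg a r (n - 1) = ∑ l ∈ Finset.range (n / (r + 1) + 1),
      (-1 : R) ^ l * ((n - 1 - l * r).choose l : R) * a ^ l := by
    have hd := Nat.succ_div (a := n - 1) (b := r + 1)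
    rw [show n - 1 + 1 = n by omega] at hd
    by_cases hdvd : (r + 1) ∣ n
    · rw [if_pos hdvd] at hd
      have hNm : n / (r + 1) + 1 = ((n - 1) / (r + 1) + 1) + 1 := by omega
      have hmul : n / (r + 1) * (r + 1) = n := Nat.div_mul_cancel hdvd
      rw [hNm, Finset.sum_range_succ]
      have hz : (n - 1 - ((n - 1) / (r + 1) + 1) * r).choose ((n - 1) / (r + 1) + 1) = 0 := by
        apply Nat.choose_eq_zero_of_lt
        have hNe : (n - 1) / (r + 1) + 1 = n / (r + 1) := by omega
        rw [hNe]
        have h2 : n = n / (r + 1) * r + n / (r + 1) := by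
          conv_lhs => rw [← hmul]
          ring
        omega
      rw [hz]
      push_cast
      rw [mul_zero, zero_mul, add_zero]
      rfl
    · rw [if_neg hdvd, add_zero] at hd
      rw [hd]
      rfl
  have hB : gg a r (n - (r + 1)) = ∑ l ∈ Finset.range (n / (r + 1)),
      (-1 : R) ^ l * ((n - (r + 1) - l * r).choose l : R) * a ^ l := by
    have h1 : n / (r + 1) = (n - (r + 1)) / (r + 1) + 1 := by
      conv_lhs => rw [show n = (n - (r + 1)) + (r + 1) by omega]
      rw [Nat.add_div_right _ (by omega)]
    rw [h1]
    rfl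
  rw [hA, hB, gg, ← Finset.sum_sub_distrib, Finset.mul_sum, Finset.sum_range_succ']
  rw [add_right_comm, ← Finset.sum_add_distrib]
  have h0 : ((-1 : R) ^ 0 * ((n - 0 * r).choose 0 : R) * a ^ 0
      - (-1 : R) ^ 0 * ((n - 1 - 0 * r).choose 0 : R) * a ^ 0) = 0 := by simp
  rw [h0, add_zero]
  apply Finset.sum_eq_zero
  intro l hl
  have hl' : l + 1 ≤ n / (r + 1) := Finset.mem_range.mp hl
  have hl1 : (l + 1) * (r + 1) ≤ n := (Nat.le_div_iff_mul_le (by omega)).mp hl'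
  have e1 : (l + 1) * (r + 1) = l * r + r + l + 1 := by ring
  have e2 : (l + 1) * r = l * r + r := by ring
  rw [e1] at hl1
  have h2 : n - (l + 1) * r = (n - 1 - (l + 1) * r) + 1 := by rw [e2]; omega
  have h3 : n - (r + 1) - l * r = n - 1 - (l + 1) * r := by rw [e2]; omega
  rw [h2, h3, Nat.choose_succ_succ]
  push_cast
  ring

theorem coeff_inverse_one_sub_X_add_aXr {R : Type*} [CommRing R] (a : R) (r : ℕ) (hr : 1 ≤ r) :
    IsUnit ((1 : R⟦X⟧) - X + C a * X ^ (r + 1)) ∧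
      ∀ n : ℕ,
        coeff n (Ring.inverse ((1 : R⟦X⟧) - X + C a * X ^ (r + 1))) =
          ∑ l ∈ Finset.range (n / (r + 1) + 1),
            (-1 : R) ^ l * (Nat.choose (n - l * r) l : R) * a ^ l := by
  set F : R⟦X⟧ := (1 : R⟦X⟧) - X + C a * X ^ (r + 1) with hF
  set G : R⟦X⟧ := PowerSeries.mk (gg a r) with hG
  have hFG : F * G = 1 := by
    ext n
    rw [hF, add_mul, sub_mul, one_mul, map_add, map_sub, coeff_one, mul_assoc,
      coeff_C_mul, coeff_X_pow_mul',
      show (X : R⟦X⟧) = X ^ 1 by rw [pow_one], coeff_X_pow_mul', coeff_mk]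
    rcases Nat.eq_zero_or_pos n with h | h
    · subst h
      simp [gg_zero]
    · rw [if_pos (show 1 ≤ n by omega), if_neg (show ¬ n = 0 by omega), coeff_mk]
      by_cases hn : r + 1 ≤ n
      · rw [if_pos hn, coeff_mk]
        exact gg_rec a r n hn
      · rw [if_neg hn, mul_zero, add_zero]
        have h1 : n / (r + 1) = 0 := Nat.div_eq_of_lt (by omega)
        have h2 : (n - 1) / (r + 1) = 0 := Nat.div_eq_of_lt (by omega)
        simp [gg, h1, h2]
  have hu : IsUnit F := IsUnit.of_mul_eq_one _ hFG
  have hinv : Ring.inverse F = G := by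
    calc Ring.inverse F = Ring.inverse F * (F * G) := by rw [hFG, mul_one]
      _ = (Ring.inverse F * F) * G := by ring
      _ = G := by rw [Ring.inverse_mul_cancel _ hu, one_mul]
  refine ⟨hu, fun n => ?_⟩
  rw [hinv, hG, coeff_mk]
  rfl
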